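/- Let ρ(x,y) = (1/(2√2))·Λ₀₀₀ + x·Λ₁₂₂ + x·Λ₂₁₂ + y·Λ₃₃₀ with x, y real. Then ρ(x,y) is Hermitian with trace 1 and tr(ρ(x,y)²) = 1/8 + 2x² + y². Moreover ρ(x,y) is positive semidefinite if and only if 1 − 2√2·y ≥ 0, 1 + 2√2·(y + 2x) ≥ 0 and 1 + 2√2·(y − 2x) ≥ 0; and the partial transpose ρ(x,y)^{T₁} is positive semidefinite if and only if 1 + 2√2·y ≥ 0, 1 − 2√2·(y + 2x) ≥ 0 and 1 − 2√2·(y − 2x) ≥ 0. -/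

import Mathlib

open Matrix Kronecker ComplexOrder

noncomputable def lam : Fin 4 → Matrix (Fin 2) (Fin 2) ℂ
  | 0 => ((Real.sqrt 2 : ℂ))⁻¹ • !![1, 0; 0, 1]
  | 1 => ((Real.sqrt 2 : ℂ))⁻¹ • !![0, 1; 1, 0]
  | 2 => ((Real.sqrt 2 : ℂ))⁻¹ • !![0, -Complex.I; Complex.I, 0]
  | 3 => ((Real.sqrt 2 : ℂ))⁻¹ • !![1, 0; 0, -1]

/-- `Λ_{jkl} = λ_j ⊗ λ_k ⊗ λ_l`. -/
noncomputable def Lam3 (j k l : Fin 4) :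
    Matrix (Fin 2 × Fin 2 × Fin 2) (Fin 2 × Fin 2 × Fin 2) ℂ :=
  lam j ⊗ₖ (lam k ⊗ₖ lam l)

/-- Partial transpose on the first qubit. -/
def PT1 (ρ : Matrix (Fin 2 × Fin 2 × Fin 2) (Fin 2 × Fin 2 × Fin 2) ℂ) :
    Matrix (Fin 2 × Fin 2 × Fin 2) (Fin 2 × Fin 2 × Fin 2) ℂ :=
  Matrix.of fun p q => ρ (q.1, p.2) (p.1, q.2)

/-- The state `ρ_{AB-C}(x,y)` of Section V of the paper. -/
noncomputable def rhoABC (x y : ℝ) :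
    Matrix (Fin 2 × Fin 2 × Fin 2) (Fin 2 × Fin 2 × Fin 2) ℂ :=
  ((1 / (2 * Real.sqrt 2) : ℝ) : ℂ) • Lam3 0 0 0 +
    (x : ℂ) • Lam3 1 2 2 + (x : ℂ) • Lam3 2 1 2 + (y : ℂ) • Lam3 3 3 0

/-! ### Auxiliary material -/

def enc : (Fin 2 × Fin 2 × Fin 2) ≃ Fin 8 where
  toFun p := ![![![0,1],![2,3]],![![4,5],![6,7]]] p.1 p.2.1 p.2.2
  invFun n := ![((0:Fin 2),(0:Fin 2),(0:Fin 2)),(0,0,1),(0,1,0),(0,1,1),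
                (1,0,0),(1,0,1),(1,1,0),(1,1,1)] n
  left_inv := by decide
  right_inv := by decide

noncomputable def M8 (x y : ℝ) : Matrix (Fin 8) (Fin 8) ℂ :=
  !![1/8 + (Real.sqrt 2:ℂ)/4*y,0,0,0,0,0,0,-((Real.sqrt 2:ℂ)/2*x);
     0,1/8 + (Real.sqrt 2:ℂ)/4*y,0,0,0,0,(Real.sqrt 2:ℂ)/2*x,0;
     0,0,1/8 - (Real.sqrt 2:ℂ)/4*y,0,0,0,0,0;
     0,0,0,1/8 - (Real.sqrt 2:ℂ)/4*y,0,0,0,0;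
     0,0,0,0,1/8 - (Real.sqrt 2:ℂ)/4*y,0,0,0;
     0,0,0,0,0,1/8 - (Real.sqrt 2:ℂ)/4*y,0,0;
     0,(Real.sqrt 2:ℂ)/2*x,0,0,0,0,1/8 + (Real.sqrt 2:ℂ)/4*y,0;
     -((Real.sqrt 2:ℂ)/2*x),0,0,0,0,0,0,1/8 + (Real.sqrt 2:ℂ)/4*y]

noncomputable def Mpt (x y : ℝ) : Matrix (Fin 8) (Fin 8) ℂ :=
  !![1/8 + (Real.sqrt 2:ℂ)/4*y,0,0,0,0,0,0,0;
     0,1/8 + (Real.sqrt 2:ℂ)/4*y,0,0,0,0,0,0;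
     0,0,1/8 - (Real.sqrt 2:ℂ)/4*y,0,0,(Real.sqrt 2:ℂ)/2*x,0,0;
     0,0,0,1/8 - (Real.sqrt 2:ℂ)/4*y,-((Real.sqrt 2:ℂ)/2*x),0,0,0;
     0,0,0,-((Real.sqrt 2:ℂ)/2*x),1/8 - (Real.sqrt 2:ℂ)/4*y,0,0,0;
     0,0,(Real.sqrt 2:ℂ)/2*x,0,0,1/8 - (Real.sqrt 2:ℂ)/4*y,0,0;
     0,0,0,0,0,0,1/8 + (Real.sqrt 2:ℂ)/4*y,0;
     0,0,0,0,0,0,0,1/8 + (Real.sqrt 2:ℂ)/4*y]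

section CV
variable {α : Type*} (a : α)
lemma cv1_1 (f : Fin 1 → α) : Matrix.vecCons a f (1:Fin 2) = f 0 := rfl
lemma cv2_1 (f : Fin 2 → α) : Matrix.vecCons a f (1:Fin 3) = f 0 := rfl
lemma cv2_2 (f : Fin 2 → α) : Matrix.vecCons a f (2:Fin 3) = f 1 := rfl
lemma cv3_1 (f : Fin 3 → α) : Matrix.vecCons a f (1:Fin 4) = f 0 := rfl
lemma cv3_2 (f : Fin 3 → α) : Matrix.vecCons a f (2:Fin 4) = f 1 := rfl
lemma cv3_3 (f : Fin 3 → α) : Matrix.vecCons a f (3:Fin 4) = f 2 := rfl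
lemma cv4_1 (f : Fin 4 → α) : Matrix.vecCons a f (1:Fin 5) = f 0 := rfl
lemma cv4_2 (f : Fin 4 → α) : Matrix.vecCons a f (2:Fin 5) = f 1 := rfl
lemma cv4_3 (f : Fin 4 → α) : Matrix.vecCons a f (3:Fin 5) = f 2 := rfl
lemma cv4_4 (f : Fin 4 → α) : Matrix.vecCons a f (4:Fin 5) = f 3 := rfl
lemma cv5_1 (f : Fin 5 → α) : Matrix.vecCons a f (1:Fin 6) = f 0 := rfl
lemma cv5_2 (f : Fin 5 → α) : Matrix.vecCons a f (2:Fin 6) = f 1 := rfl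
lemma cv5_3 (f : Fin 5 → α) : Matrix.vecCons a f (3:Fin 6) = f 2 := rfl
lemma cv5_4 (f : Fin 5 → α) : Matrix.vecCons a f (4:Fin 6) = f 3 := rfl
lemma cv5_5 (f : Fin 5 → α) : Matrix.vecCons a f (5:Fin 6) = f 4 := rfl
lemma cv6_1 (f : Fin 6 → α) : Matrix.vecCons a f (1:Fin 7) = f 0 := rfl
lemma cv6_2 (f : Fin 6 → α) : Matrix.vecCons a f (2:Fin 7) = f 1 := rfl
lemma cv6_3 (f : Fin 6 → α) : Matrix.vecCons a f (3:Fin 7) = f 2 := rfl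
lemma cv6_4 (f : Fin 6 → α) : Matrix.vecCons a f (4:Fin 7) = f 3 := rfl
lemma cv6_5 (f : Fin 6 → α) : Matrix.vecCons a f (5:Fin 7) = f 4 := rfl
lemma cv6_6 (f : Fin 6 → α) : Matrix.vecCons a f (6:Fin 7) = f 5 := rfl
lemma cv7_1 (f : Fin 7 → α) : Matrix.vecCons a f (1:Fin 8) = f 0 := rfl
lemma cv7_2 (f : Fin 7 → α) : Matrix.vecCons a f (2:Fin 8) = f 1 := rfl
lemma cv7_3 (f : Fin 7 → α) : Matrix.vecCons a f (3:Fin 8) = f 2 := rfl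
lemma cv7_4 (f : Fin 7 → α) : Matrix.vecCons a f (4:Fin 8) = f 3 := rfl
lemma cv7_5 (f : Fin 7 → α) : Matrix.vecCons a f (5:Fin 8) = f 4 := rfl
lemma cv7_6 (f : Fin 7 → α) : Matrix.vecCons a f (6:Fin 8) = f 5 := rfl
lemma cv7_7 (f : Fin 7 → α) : Matrix.vecCons a f (7:Fin 8) = f 6 := rfl
end CV

section V8
variable {α : Type*} (a₀ a₁ a₂ a₃ a₄ a₅ a₆ a₇ : α)
lemma v8_0 : ![a₀,a₁,a₂,a₃,a₄,a₅,a₆,a₇] (0:Fin 8) = a₀ := rfl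
lemma v8_1 : ![a₀,a₁,a₂,a₃,a₄,a₅,a₆,a₇] (1:Fin 8) = a₁ := rfl
lemma v8_2 : ![a₀,a₁,a₂,a₃,a₄,a₅,a₆,a₇] (2:Fin 8) = a₂ := rfl
lemma v8_3 : ![a₀,a₁,a₂,a₃,a₄,a₅,a₆,a₇] (3:Fin 8) = a₃ := rfl
lemma v8_4 : ![a₀,a₁,a₂,a₃,a₄,a₅,a₆,a₇] (4:Fin 8) = a₄ := rfl
lemma v8_5 : ![a₀,a₁,a₂,a₃,a₄,a₅,a₆,a₇] (5:Fin 8) = a₅ := rfl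
lemma v8_6 : ![a₀,a₁,a₂,a₃,a₄,a₅,a₆,a₇] (6:Fin 8) = a₆ := rfl
lemma v8_7 : ![a₀,a₁,a₂,a₃,a₄,a₅,a₆,a₇] (7:Fin 8) = a₇ := rfl
end V8

set_option maxHeartbeats 3200000 in
lemma rho_eq (x y : ℝ) : rhoABC x y = (M8 x y).submatrix enc enc := by
  have h2 : ((Real.sqrt 2 :ℝ):ℂ)^2 = 2 := by
    rw [← Complex.ofReal_pow, Real.sq_sqrt (by norm_num : (0:ℝ) ≤ 2)]
    try norm_num
  have h3 : ((Real.sqrt 2 :ℝ):ℂ)^3 = 2*(Real.sqrt 2:ℂ) := by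
    rw [pow_succ, h2]; try ring
  have h4 : ((Real.sqrt 2 :ℝ):ℂ)^4 = 4 := by
    rw [show ((Real.sqrt 2:ℝ):ℂ)^4 = (((Real.sqrt 2:ℝ):ℂ)^2)^2 by ring, h2]; norm_num
  have h0 : ((Real.sqrt 2 :ℝ):ℂ) ≠ 0 := by
    rw [Complex.ofReal_ne_zero]; positivity
  have hinv : ((Real.sqrt 2 :ℝ):ℂ)⁻¹ = ((Real.sqrt 2:ℝ):ℂ)/2 := by
    exact inv_eq_of_mul_eq_one_right (by linear_combination h2/2)
  ext ⟨a,b,c⟩ ⟨d,e,f⟩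
  fin_cases a <;> fin_cases b <;> fin_cases c <;> fin_cases d <;> fin_cases e <;> fin_cases f <;>
    · simp [rhoABC, Lam3, lam, M8, enc, Matrix.add_apply, Matrix.smul_apply, kroneckerMap_apply,
        hinv, v8_0, v8_1, v8_2, v8_3, v8_4, v8_5, v8_6, v8_7,
        cv1_1, cv2_1, cv2_2, cv3_1, cv3_2, cv3_3, cv4_1, cv4_2, cv4_3, cv4_4, cv5_1, cv5_2, cv5_3, cv5_4, cv5_5, cv6_1, cv6_2, cv6_3, cv6_4, cv6_5, cv6_6, cv7_1, cv7_2, cv7_3, cv7_4, cv7_5, cv7_6, cv7_7]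
      try rfl
      try ring_nf
      try simp only [h2, h3, h4, Complex.I_sq]
      try ring_nf
      try rfl

set_option maxHeartbeats 3200000 in
lemma pt_eq (x y : ℝ) : PT1 (rhoABC x y) = (Mpt x y).submatrix enc enc := by
  ext ⟨a,b,c⟩ ⟨d,e,f⟩
  show rhoABC x y _ _ = _
  rw [rho_eq]
  fin_cases a <;> fin_cases b <;> fin_cases c <;> fin_cases d <;> fin_cases e <;> fin_cases f <;>
    · simp [enc, M8, Mpt, v8_0, v8_1, v8_2, v8_3, v8_4, v8_5, v8_6, v8_7,
        cv1_1, cv2_1, cv2_2, cv3_1, cv3_2, cv3_3, cv4_1, cv4_2, cv4_3, cv4_4, cv5_1, cv5_2, cv5_3, cv5_4, cv5_5, cv6_1, cv6_2, cv6_3, cv6_4, cv6_5, cv6_6, cv7_1, cv7_2, cv7_3, cv7_4, cv7_5, cv7_6, cv7_7]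
      try rfl

lemma trace_enc (M : Matrix (Fin 8) (Fin 8) ℂ) : (M.submatrix enc enc).trace = M.trace := by
  simpa [Matrix.trace, Matrix.diag] using Equiv.sum_comp enc (fun i => M i i)

lemma rank1_psd (v : Fin 8 → ℂ) (hv : ∀ i, (starRingEnd ℂ) (v i) = v i) :
    (Matrix.of fun i j => v i * v j).PosSemidef := by
  have h : (Matrix.of fun i j => v i * v j)
      = (Matrix.of (fun (_ : Fin 1) j => v j))ᴴ * (Matrix.of fun (_ : Fin 1) j => v j) := by
    ext i j
    simp [Matrix.mul_apply, Matrix.conjTranspose_apply, hv]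
  rw [h]
  exact Matrix.posSemidef_conjTranspose_mul_self _

lemma psd_smul {M : Matrix (Fin 8) (Fin 8) ℂ} (hM : M.PosSemidef) {c : ℝ} (hc : 0 ≤ c) :
    ((c : ℂ) • M).PosSemidef := by
  refine Matrix.PosSemidef.of_dotProduct_mulVec_nonneg ?_ (fun v => ?_)
  · show _ = _
    rw [Matrix.conjTranspose_smul, hM.1.eq]
    simp [Complex.conj_ofReal]
  · rw [Matrix.smul_mulVec, dotProduct_smul, smul_eq_mul]
    exact mul_nonneg (Complex.zero_le_real.2 hc) (hM.dotProduct_mulVec_nonneg v)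


lemma herm_smul {M : Matrix (Fin 8) (Fin 8) ℂ} (hM : M.IsHermitian) (c : ℝ) :
    ((c : ℂ) • M).IsHermitian := by
  show _ = _
  rw [Matrix.conjTranspose_smul, hM.eq]
  simp [Complex.conj_ofReal]

noncomputable def rk1 (v : Fin 8 → ℂ) : Matrix (Fin 8) (Fin 8) ℂ :=
  Matrix.of fun i j => v i * v j

def projA : Matrix (Fin 8) (Fin 8) ℂ := Matrix.diagonal ![0,0,1,1,1,1,0,0]
def projB : Matrix (Fin 8) (Fin 8) ℂ := Matrix.diagonal ![1,1,0,0,0,0,1,1]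

lemma projA_psd : projA.PosSemidef := by
  refine Matrix.PosSemidef.diagonal ?_
  intro i
  fin_cases i <;> norm_num

lemma projB_psd : projB.PosSemidef := by
  refine Matrix.PosSemidef.diagonal ?_
  intro i
  fin_cases i <;> norm_num

set_option maxHeartbeats 3200000 in
lemma M8_decomp (x y : ℝ) :
    M8 x y = (((1 - 2*Real.sqrt 2*y)/8 : ℝ) : ℂ) • projA
      + (((1 + 2*Real.sqrt 2*(y + 2*x))/16 : ℝ) : ℂ) •
          (rk1 ![1,0,0,0,0,0,0,-1] + rk1 ![0,1,0,0,0,0,1,0])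
      + (((1 + 2*Real.sqrt 2*(y - 2*x))/16 : ℝ) : ℂ) •
          (rk1 ![1,0,0,0,0,0,0,1] + rk1 ![0,1,0,0,0,0,-1,0]) := by
  ext i j
  fin_cases i <;> fin_cases j <;>
    · simp [M8, projA, rk1, Matrix.diagonal_apply, Matrix.add_apply, Matrix.smul_apply,
        Matrix.vecHead, Matrix.vecTail, Pi.smul_apply, smul_eq_mul,
        v8_0, v8_1, v8_2, v8_3, v8_4, v8_5, v8_6, v8_7,
        cv1_1, cv2_1, cv2_2, cv3_1, cv3_2, cv3_3, cv4_1, cv4_2, cv4_3, cv4_4, cv5_1, cv5_2, cv5_3, cv5_4, cv5_5, cv6_1, cv6_2, cv6_3, cv6_4, cv6_5, cv6_6, cv7_1, cv7_2, cv7_3, cv7_4, cv7_5, cv7_6, cv7_7]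
      try rfl
      try push_cast
      try ring

set_option maxHeartbeats 3200000 in
lemma Mpt_decomp (x y : ℝ) :
    Mpt x y = (((1 + 2*Real.sqrt 2*y)/8 : ℝ) : ℂ) • projB
      + (((1 - 2*Real.sqrt 2*(y - 2*x))/16 : ℝ) : ℂ) •
          (rk1 ![0,0,1,0,0,1,0,0] + rk1 ![0,0,0,1,-1,0,0,0])
      + (((1 - 2*Real.sqrt 2*(y + 2*x))/16 : ℝ) : ℂ) •
          (rk1 ![0,0,1,0,0,-1,0,0] + rk1 ![0,0,0,1,1,0,0,0]) := by
  ext i j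
  fin_cases i <;> fin_cases j <;>
    · simp [Mpt, projB, rk1, Matrix.diagonal_apply, Matrix.add_apply, Matrix.smul_apply,
        Matrix.vecHead, Matrix.vecTail, Pi.smul_apply, smul_eq_mul,
        v8_0, v8_1, v8_2, v8_3, v8_4, v8_5, v8_6, v8_7,
        cv1_1, cv2_1, cv2_2, cv3_1, cv3_2, cv3_3, cv4_1, cv4_2, cv4_3, cv4_4, cv5_1, cv5_2, cv5_3, cv5_4, cv5_5, cv6_1, cv6_2, cv6_3, cv6_4, cv6_5, cv6_6, cv7_1, cv7_2, cv7_3, cv7_4, cv7_5, cv7_6, cv7_7]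
      try rfl
      try push_cast
      try ring

lemma rk1_psd (v : Fin 8 → ℂ) (hv : ∀ i, (starRingEnd ℂ) (v i) = v i) :
    (rk1 v).PosSemidef := rank1_psd v hv

lemma herm8 (x y : ℝ) : (M8 x y).IsHermitian := by
  rw [M8_decomp]
  refine Matrix.IsHermitian.add (Matrix.IsHermitian.add ?_ ?_) ?_
  · exact herm_smul projA_psd.1 _
  · exact herm_smul ((rk1_psd _ (by intro i; fin_cases i <;> simp [v8_0, v8_1, v8_2, v8_3, v8_4, v8_5, v8_6, v8_7])).add
      (rk1_psd _ (by intro i; fin_cases i <;> simp [v8_0, v8_1, v8_2, v8_3, v8_4, v8_5, v8_6, v8_7]))).1 _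
  · exact herm_smul ((rk1_psd _ (by intro i; fin_cases i <;> simp [v8_0, v8_1, v8_2, v8_3, v8_4, v8_5, v8_6, v8_7])).add
      (rk1_psd _ (by intro i; fin_cases i <;> simp [v8_0, v8_1, v8_2, v8_3, v8_4, v8_5, v8_6, v8_7]))).1 _

lemma hermpt (x y : ℝ) : (Mpt x y).IsHermitian := by
  rw [Mpt_decomp]
  refine Matrix.IsHermitian.add (Matrix.IsHermitian.add ?_ ?_) ?_
  · exact herm_smul projB_psd.1 _
  · exact herm_smul ((rk1_psd _ (by intro i; fin_cases i <;> simp [v8_0, v8_1, v8_2, v8_3, v8_4, v8_5, v8_6, v8_7])).add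
      (rk1_psd _ (by intro i; fin_cases i <;> simp [v8_0, v8_1, v8_2, v8_3, v8_4, v8_5, v8_6, v8_7]))).1 _
  · exact herm_smul ((rk1_psd _ (by intro i; fin_cases i <;> simp [v8_0, v8_1, v8_2, v8_3, v8_4, v8_5, v8_6, v8_7])).add
      (rk1_psd _ (by intro i; fin_cases i <;> simp [v8_0, v8_1, v8_2, v8_3, v8_4, v8_5, v8_6, v8_7]))).1 _

lemma sqrt2_facts : ((Real.sqrt 2 :ℝ):ℂ)^2 = 2 := by
  rw [← Complex.ofReal_pow, Real.sq_sqrt (by norm_num : (0:ℝ) ≤ 2)]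
  try norm_num

set_option maxHeartbeats 1600000 in
lemma trace_M8 (x y : ℝ) : (M8 x y).trace = 1 := by
  simp [Matrix.trace, Matrix.diag, M8, Fin.sum_univ_succ, v8_0, v8_1, v8_2, v8_3, v8_4, v8_5, v8_6, v8_7,
        cv1_1, cv2_1, cv2_2, cv3_1, cv3_2, cv3_3, cv4_1, cv4_2, cv4_3, cv4_4, cv5_1, cv5_2, cv5_3, cv5_4, cv5_5, cv6_1, cv6_2, cv6_3, cv6_4, cv6_5, cv6_6, cv7_1, cv7_2, cv7_3, cv7_4, cv7_5, cv7_6, cv7_7]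
  try ring

set_option maxHeartbeats 1600000 in
lemma trace_M8_sq (x y : ℝ) :
    (M8 x y * M8 x y).trace = 1 / 8 + (2 : ℂ) * (x : ℂ) ^ 2 + (y : ℂ) ^ 2 := by
  have h2 := sqrt2_facts
  have h3 : ((Real.sqrt 2 :ℝ):ℂ)^3 = 2*(Real.sqrt 2:ℂ) := by rw [pow_succ, h2]; try ring
  have h4 : ((Real.sqrt 2 :ℝ):ℂ)^4 = 4 := by
    rw [show ((Real.sqrt 2:ℝ):ℂ)^4 = (((Real.sqrt 2:ℝ):ℂ)^2)^2 by ring, h2]; norm_num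
  simp [Matrix.trace, Matrix.diag, Matrix.mul_apply, M8, Fin.sum_univ_succ, v8_0, v8_1, v8_2, v8_3, v8_4, v8_5, v8_6, v8_7,
        cv1_1, cv2_1, cv2_2, cv3_1, cv3_2, cv3_3, cv4_1, cv4_2, cv4_3, cv4_4, cv5_1, cv5_2, cv5_3, cv5_4, cv5_5, cv6_1, cv6_2, cv6_3, cv6_4, cv6_5, cv6_6, cv7_1, cv7_2, cv7_3, cv7_4, cv7_5, cv7_6, cv7_7]
  ring_nf
  simp only [h2, h3, h4]
  ring

set_option maxHeartbeats 1600000 in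
lemma psd8_iff (x y : ℝ) : (M8 x y).PosSemidef ↔
    (0 ≤ 1 - 2 * Real.sqrt 2 * y ∧ 0 ≤ 1 + 2 * Real.sqrt 2 * (y + 2 * x) ∧
        0 ≤ 1 + 2 * Real.sqrt 2 * (y - 2 * x)) := by
  constructor
  · intro h
    refine ⟨?_, ?_, ?_⟩
    · have h1 := h.dotProduct_mulVec_nonneg ![0,0,1,0,0,0,0,0]
      rw [show star ![(0:ℂ),0,1,0,0,0,0,0] ⬝ᵥ (M8 x y) *ᵥ ![0,0,1,0,0,0,0,0]
          = (((1 - 2*Real.sqrt 2*y)/8 : ℝ) : ℂ) by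
        simp [dotProduct, Matrix.mulVec, M8, Fin.sum_univ_succ, v8_0, v8_1, v8_2, v8_3, v8_4, v8_5, v8_6, v8_7,
        cv1_1, cv2_1, cv2_2, cv3_1, cv3_2, cv3_3, cv4_1, cv4_2, cv4_3, cv4_4, cv5_1, cv5_2, cv5_3, cv5_4, cv5_5, cv6_1, cv6_2, cv6_3, cv6_4, cv6_5, cv6_6, cv7_1, cv7_2, cv7_3, cv7_4, cv7_5, cv7_6, cv7_7]
        push_cast; ring] at h1
      have := Complex.zero_le_real.1 h1
      linarith
    · have h1 := h.dotProduct_mulVec_nonneg ![0,1,0,0,0,0,1,0]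
      rw [show star ![(0:ℂ),1,0,0,0,0,1,0] ⬝ᵥ (M8 x y) *ᵥ ![0,1,0,0,0,0,1,0]
          = (((1 + 2*Real.sqrt 2*(y + 2*x))/4 : ℝ) : ℂ) by
        simp [dotProduct, Matrix.mulVec, M8, Fin.sum_univ_succ, v8_0, v8_1, v8_2, v8_3, v8_4, v8_5, v8_6, v8_7,
        cv1_1, cv2_1, cv2_2, cv3_1, cv3_2, cv3_3, cv4_1, cv4_2, cv4_3, cv4_4, cv5_1, cv5_2, cv5_3, cv5_4, cv5_5, cv6_1, cv6_2, cv6_3, cv6_4, cv6_5, cv6_6, cv7_1, cv7_2, cv7_3, cv7_4, cv7_5, cv7_6, cv7_7]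
        push_cast; ring] at h1
      have := Complex.zero_le_real.1 h1
      linarith
    · have h1 := h.dotProduct_mulVec_nonneg ![1,0,0,0,0,0,0,1]
      rw [show star ![(1:ℂ),0,0,0,0,0,0,1] ⬝ᵥ (M8 x y) *ᵥ ![1,0,0,0,0,0,0,1]
          = (((1 + 2*Real.sqrt 2*(y - 2*x))/4 : ℝ) : ℂ) by
        simp [dotProduct, Matrix.mulVec, M8, Fin.sum_univ_succ, v8_0, v8_1, v8_2, v8_3, v8_4, v8_5, v8_6, v8_7,
        cv1_1, cv2_1, cv2_2, cv3_1, cv3_2, cv3_3, cv4_1, cv4_2, cv4_3, cv4_4, cv5_1, cv5_2, cv5_3, cv5_4, cv5_5, cv6_1, cv6_2, cv6_3, cv6_4, cv6_5, cv6_6, cv7_1, cv7_2, cv7_3, cv7_4, cv7_5, cv7_6, cv7_7]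
        push_cast; ring] at h1
      have := Complex.zero_le_real.1 h1
      linarith
  · rintro ⟨h1, h2, h3⟩
    rw [M8_decomp]
    refine Matrix.PosSemidef.add (Matrix.PosSemidef.add ?_ ?_) ?_
    · exact psd_smul projA_psd (by linarith)
    · exact psd_smul ((rk1_psd _ (by intro i; fin_cases i <;> simp [v8_0, v8_1, v8_2, v8_3, v8_4, v8_5, v8_6, v8_7])).add
        (rk1_psd _ (by intro i; fin_cases i <;> simp [v8_0, v8_1, v8_2, v8_3, v8_4, v8_5, v8_6, v8_7]))) (by linarith)
    · exact psd_smul ((rk1_psd _ (by intro i; fin_cases i <;> simp [v8_0, v8_1, v8_2, v8_3, v8_4, v8_5, v8_6, v8_7])).add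
        (rk1_psd _ (by intro i; fin_cases i <;> simp [v8_0, v8_1, v8_2, v8_3, v8_4, v8_5, v8_6, v8_7]))) (by linarith)

set_option maxHeartbeats 1600000 in
lemma psdpt_iff (x y : ℝ) : (Mpt x y).PosSemidef ↔
    (0 ≤ 1 + 2 * Real.sqrt 2 * y ∧ 0 ≤ 1 - 2 * Real.sqrt 2 * (y + 2 * x) ∧
        0 ≤ 1 - 2 * Real.sqrt 2 * (y - 2 * x)) := by
  constructor
  · intro h
    refine ⟨?_, ?_, ?_⟩
    · have h1 := h.dotProduct_mulVec_nonneg ![1,0,0,0,0,0,0,0]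
      rw [show star ![(1:ℂ),0,0,0,0,0,0,0] ⬝ᵥ (Mpt x y) *ᵥ ![1,0,0,0,0,0,0,0]
          = (((1 + 2*Real.sqrt 2*y)/8 : ℝ) : ℂ) by
        simp [dotProduct, Matrix.mulVec, Mpt, Fin.sum_univ_succ, v8_0, v8_1, v8_2, v8_3, v8_4, v8_5, v8_6, v8_7,
        cv1_1, cv2_1, cv2_2, cv3_1, cv3_2, cv3_3, cv4_1, cv4_2, cv4_3, cv4_4, cv5_1, cv5_2, cv5_3, cv5_4, cv5_5, cv6_1, cv6_2, cv6_3, cv6_4, cv6_5, cv6_6, cv7_1, cv7_2, cv7_3, cv7_4, cv7_5, cv7_6, cv7_7]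
        push_cast; ring] at h1
      have := Complex.zero_le_real.1 h1
      linarith
    · have h1 := h.dotProduct_mulVec_nonneg ![0,0,1,0,0,-1,0,0]
      rw [show star ![(0:ℂ),0,1,0,0,-1,0,0] ⬝ᵥ (Mpt x y) *ᵥ ![0,0,1,0,0,-1,0,0]
          = (((1 - 2*Real.sqrt 2*(y + 2*x))/4 : ℝ) : ℂ) by
        simp [dotProduct, Matrix.mulVec, Mpt, Fin.sum_univ_succ, v8_0, v8_1, v8_2, v8_3, v8_4, v8_5, v8_6, v8_7,
        cv1_1, cv2_1, cv2_2, cv3_1, cv3_2, cv3_3, cv4_1, cv4_2, cv4_3, cv4_4, cv5_1, cv5_2, cv5_3, cv5_4, cv5_5, cv6_1, cv6_2, cv6_3, cv6_4, cv6_5, cv6_6, cv7_1, cv7_2, cv7_3, cv7_4, cv7_5, cv7_6, cv7_7]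
        push_cast; ring] at h1
      have := Complex.zero_le_real.1 h1
      linarith
    · have h1 := h.dotProduct_mulVec_nonneg ![0,0,1,0,0,1,0,0]
      rw [show star ![(0:ℂ),0,1,0,0,1,0,0] ⬝ᵥ (Mpt x y) *ᵥ ![0,0,1,0,0,1,0,0]
          = (((1 - 2*Real.sqrt 2*(y - 2*x))/4 : ℝ) : ℂ) by
        simp [dotProduct, Matrix.mulVec, Mpt, Fin.sum_univ_succ, v8_0, v8_1, v8_2, v8_3, v8_4, v8_5, v8_6, v8_7,
        cv1_1, cv2_1, cv2_2, cv3_1, cv3_2, cv3_3, cv4_1, cv4_2, cv4_3, cv4_4, cv5_1, cv5_2, cv5_3, cv5_4, cv5_5, cv6_1, cv6_2, cv6_3, cv6_4, cv6_5, cv6_6, cv7_1, cv7_2, cv7_3, cv7_4, cv7_5, cv7_6, cv7_7]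
        push_cast; ring] at h1
      have := Complex.zero_le_real.1 h1
      linarith
  · rintro ⟨h1, h2, h3⟩
    rw [Mpt_decomp]
    refine Matrix.PosSemidef.add (Matrix.PosSemidef.add ?_ ?_) ?_
    · exact psd_smul projB_psd (by linarith)
    · exact psd_smul ((rk1_psd _ (by intro i; fin_cases i <;> simp [v8_0, v8_1, v8_2, v8_3, v8_4, v8_5, v8_6, v8_7])).add
        (rk1_psd _ (by intro i; fin_cases i <;> simp [v8_0, v8_1, v8_2, v8_3, v8_4, v8_5, v8_6, v8_7]))) (by linarith)
    · exact psd_smul ((rk1_psd _ (by intro i; fin_cases i <;> simp [v8_0, v8_1, v8_2, v8_3, v8_4, v8_5, v8_6, v8_7])).add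
        (rk1_psd _ (by intro i; fin_cases i <;> simp [v8_0, v8_1, v8_2, v8_3, v8_4, v8_5, v8_6, v8_7]))) (by linarith)

theorem stmt_18 (x y : ℝ) :
    (rhoABC x y).IsHermitian ∧ (rhoABC x y).trace = 1 ∧
    (rhoABC x y * rhoABC x y).trace = 1 / 8 + (2 : ℂ) * (x : ℂ) ^ 2 + (y : ℂ) ^ 2 ∧
    ((rhoABC x y).PosSemidef ↔
      0 ≤ 1 - 2 * Real.sqrt 2 * y ∧ 0 ≤ 1 + 2 * Real.sqrt 2 * (y + 2 * x) ∧
        0 ≤ 1 + 2 * Real.sqrt 2 * (y - 2 * x)) ∧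
    ((PT1 (rhoABC x y)).PosSemidef ↔
      0 ≤ 1 + 2 * Real.sqrt 2 * y ∧ 0 ≤ 1 - 2 * Real.sqrt 2 * (y + 2 * x) ∧
        0 ≤ 1 - 2 * Real.sqrt 2 * (y - 2 * x)) := by
  refine ⟨?_, ?_, ?_, ?_, ?_⟩
  · rw [rho_eq]
    exact (herm8 x y).submatrix _
  · rw [rho_eq, trace_enc, trace_M8]
  · rw [rho_eq, Matrix.submatrix_mul_equiv, trace_enc, trace_M8_sq]
  · rw [rho_eq, Matrix.posSemidef_submatrix_equiv]
    exact psd8_iff x y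
  · rw [pt_eq, Matrix.posSemidef_submatrix_equiv]
    exact psdpt_iff x y
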